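/- There exists an n-vertex graph G with no 3-cycles and no 4-cycles such that s(G) = e(G) = f(n); i.e., the maximum of the score s over all n-vertex graphs equals f(n) and is attained by a feasible graph. -/

import Mathlib

open Finset

open scoped Classical

noncomputable def edgeCount {V : Type} [Fintype V] (G : SimpleGraph V) : ℕ :=
  G.edgeFinset.card

noncomputable def triCount {V : Type} [Fintype V] [DecidableEq V] (G : SimpleGraph V) : ℕ :=
  (G.cliqueFinset 3).card

noncomputable def sqCount {V : Type} [Fintype V] [DecidableEq V] (G : SimpleGraph V) : ℕ :=
  ((univ : Finset (V × V × V × V)).filter fun p =>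
    p.1 ≠ p.2.1 ∧ p.1 ≠ p.2.2.1 ∧ p.1 ≠ p.2.2.2 ∧ p.2.1 ≠ p.2.2.1 ∧ p.2.1 ≠ p.2.2.2 ∧
      p.2.2.1 ≠ p.2.2.2 ∧ G.Adj p.1 p.2.1 ∧ G.Adj p.2.1 p.2.2.1 ∧ G.Adj p.2.2.1 p.2.2.2 ∧
      G.Adj p.2.2.2 p.1).card / 8

noncomputable def score {V : Type} [Fintype V] [DecidableEq V] (G : SimpleGraph V) : ℤ :=
  (edgeCount G : ℤ) - (triCount G : ℤ) - (sqCount G : ℤ)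

def noC3 {V : Type} (G : SimpleGraph V) : Prop := G.CliqueFree 3

def noC4 {V : Type} (G : SimpleGraph V) : Prop :=
  ∀ a b c d : V, a ≠ b → a ≠ c → a ≠ d → b ≠ c → b ≠ d → c ≠ d →
    G.Adj a b → G.Adj b c → G.Adj c d → ¬ G.Adj d a

noncomputable def extremalNum (n : ℕ) : ℕ :=
  ((univ : Finset (SimpleGraph (Fin n))).filter fun G => noC3 G ∧ noC4 G).sup edgeCount

noncomputable def gflip {V : Type} [DecidableEq V] (G : SimpleGraph V) (u v : V) : SimpleGraph V :=
  SimpleGraph.fromEdgeSet (symmDiff G.edgeSet {s(u, v)})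

section Aux

variable {V : Type} [Fintype V] [DecidableEq V]

noncomputable def sqT (G : SimpleGraph V) : Finset (V × V × V × V) :=
  (univ : Finset (V × V × V × V)).filter fun p =>
    p.1 ≠ p.2.1 ∧ p.1 ≠ p.2.2.1 ∧ p.1 ≠ p.2.2.2 ∧ p.2.1 ≠ p.2.2.1 ∧ p.2.1 ≠ p.2.2.2 ∧
      p.2.2.1 ≠ p.2.2.2 ∧ G.Adj p.1 p.2.1 ∧ G.Adj p.2.1 p.2.2.1 ∧ G.Adj p.2.2.1 p.2.2.2 ∧
      G.Adj p.2.2.2 p.1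

lemma sqCount_eq (G : SimpleGraph V) : sqCount G = (sqT G).card / 8 := rfl

lemma sqT_mono {G H : SimpleGraph V} (h : G ≤ H) : sqT G ⊆ sqT H := by
  intro p hp
  simp only [sqT, mem_filter, mem_univ, true_and] at hp ⊢
  exact ⟨hp.1, hp.2.1, hp.2.2.1, hp.2.2.2.1, hp.2.2.2.2.1, hp.2.2.2.2.2.1,
    h hp.2.2.2.2.2.2.1, h hp.2.2.2.2.2.2.2.1, h hp.2.2.2.2.2.2.2.2.1,
    h hp.2.2.2.2.2.2.2.2.2⟩

lemma edgeCount_delete {G : SimpleGraph V} {a b : V} (hab : G.Adj a b) :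
    edgeCount (G.deleteEdges {s(a, b)}) + 1 = edgeCount G := by
  have h1 : (G.deleteEdges {s(a, b)}).edgeFinset = G.edgeFinset.erase s(a, b) := by
    ext e
    simp only [SimpleGraph.mem_edgeFinset, SimpleGraph.edgeSet_deleteEdges, Set.mem_diff,
      Set.mem_singleton_iff, Finset.mem_erase]
    tauto
  have hmem : s(a, b) ∈ G.edgeFinset := by
    simpa [SimpleGraph.mem_edgeFinset] using hab
  have hpos : 0 < G.edgeFinset.card := Finset.card_pos.mpr ⟨_, hmem⟩
  rw [edgeCount, edgeCount]
  convert (show (G.deleteEdges {s(a, b)}).edgeFinset.card + 1 = G.edgeFinset.card by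
    rw [h1, Finset.card_erase_of_mem hmem]; omega)

lemma feasible_counts {G : SimpleGraph V} (h3 : noC3 G) (h4 : noC4 G) :
    triCount G = 0 ∧ sqCount G = 0 := by
  constructor
  · rw [triCount, Finset.card_eq_zero, SimpleGraph.cliqueFinset_eq_empty_iff]
    exact h3
  · rw [sqCount_eq]
    have : sqT G = ∅ := by
      rw [Finset.eq_empty_iff_forall_notMem]
      intro p hp
      simp only [sqT, mem_filter, mem_univ, true_and] at hp
      obtain ⟨h1, h2, h3', h4', h5, h6, a1, a2, a3, a4⟩ := hp
      exact h4 _ _ _ _ h1 h2 h3' h4' h5 h6 a1 a2 a3 a4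
    simp [this]

end Aux

lemma score_le_aux (n : ℕ) :
    ∀ k (H : SimpleGraph (Fin n)), edgeCount H = k → score H ≤ (extremalNum n : ℤ) := by
  intro k
  induction k using Nat.strong_induction_on with
  | _ k ih =>
    intro H hk
    by_cases hfeas : noC3 H ∧ noC4 H
    · obtain ⟨h3, h4⟩ := feasible_counts hfeas.1 hfeas.2
      have hmem : H ∈ (univ : Finset (SimpleGraph (Fin n))).filter
          fun G => noC3 G ∧ noC4 G := by simp [hfeas]
      have hle : edgeCount H ≤ extremalNum n := Finset.le_sup (f := edgeCount) hmem
      rw [score, h3, h4]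
      push_cast
      omega
    · -- find an edge whose deletion decreases triCount + sqCount
      have key : ∃ a b : Fin n, H.Adj a b ∧
          triCount (H.deleteEdges {s(a, b)}) + sqCount (H.deleteEdges {s(a, b)}) + 1 ≤
            triCount H + sqCount H := by
        by_cases hc3 : noC3 H
        · -- then ¬ noC4 H : 4-cycle case
          have hc4 : ¬ noC4 H := fun h => hfeas ⟨hc3, h⟩
          simp only [noC4] at hc4
          push_neg at hc4
          obtain ⟨a, b, c, d, hab', hac, had, hbc', hbd, hcd', hab, hbc, hcd, hda⟩ := hc4
          refine ⟨a, b, hab, ?_⟩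
          have hle : H.deleteEdges {s(a, b)} ≤ H := SimpleGraph.deleteEdges_le _
          have hsub3 : (H.deleteEdges {s(a, b)}).cliqueFinset 3 ⊆ H.cliqueFinset 3 := by
            intro t ht
            rw [SimpleGraph.mem_cliqueFinset_iff] at ht ⊢
            exact ht.mono hle
          have htri : triCount (H.deleteEdges {s(a, b)}) ≤ triCount H := by
            unfold triCount; convert Finset.card_le_card hsub3
          have hsub : sqT (H.deleteEdges {s(a, b)}) ⊆ sqT H := sqT_mono hle
          have hTcard : ({(a,b,c,d), (b,c,d,a), (c,d,a,b), (d,a,b,c), (a,d,c,b), (d,c,b,a),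
              (c,b,a,d), (b,a,d,c)} : Finset (Fin n × Fin n × Fin n × Fin n)).card = 8 := by
            simp [Finset.card_insert_of_notMem, Prod.ext_iff, hab', hac, had, hbc', hbd, hcd',
              hab'.symm, hac.symm, had.symm, hbc'.symm, hbd.symm, hcd'.symm]
          have hTsub : ({(a,b,c,d), (b,c,d,a), (c,d,a,b), (d,a,b,c), (a,d,c,b), (d,c,b,a),
              (c,b,a,d), (b,a,d,c)} : Finset (Fin n × Fin n × Fin n × Fin n)) ⊆
              sqT H \ sqT (H.deleteEdges {s(a, b)}) := by
            simp only [Finset.insert_subset_iff, Finset.singleton_subset_iff]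
            refine ⟨?_, ?_, ?_, ?_, ?_, ?_, ?_, ?_⟩ <;>
              simp [sqT, mem_sdiff, SimpleGraph.deleteEdges_adj, Sym2.eq_iff,
                hab, hbc, hcd, hda, hab.symm, hbc.symm, hcd.symm, hda.symm,
                hab', hac, had, hbc', hbd, hcd',
                hab'.symm, hac.symm, had.symm, hbc'.symm, hbd.symm, hcd'.symm]
          have h8 : 8 ≤ (sqT H \ sqT (H.deleteEdges {s(a, b)})).card := by
            rw [← hTcard]
            exact Finset.card_le_card hTsub
          have hcards : (sqT (H.deleteEdges {s(a, b)})).card + 8 ≤ (sqT H).card := by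
            have h1 := Finset.card_sdiff_of_subset hsub
            have h2 := Finset.card_le_card hsub
            omega
          have hsq : sqCount (H.deleteEdges {s(a, b)}) + 1 ≤ sqCount H := by
            rw [sqCount_eq, sqCount_eq]
            omega
          omega
        · -- triangle case
          simp only [noC3, SimpleGraph.CliqueFree, not_forall, not_not] at hc3
          obtain ⟨t, ht⟩ := hc3
          rw [SimpleGraph.is3Clique_iff] at ht
          obtain ⟨a, b, c, hab, hac, hbc, rfl⟩ := ht
          refine ⟨a, b, hab, ?_⟩
          have hle : H.deleteEdges {s(a, b)} ≤ H := SimpleGraph.deleteEdges_le _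
          have hsub : (H.deleteEdges {s(a, b)}).cliqueFinset 3 ⊆ H.cliqueFinset 3 := by
            intro t ht
            rw [SimpleGraph.mem_cliqueFinset_iff] at ht ⊢
            exact ht.mono hle
          have hmem : ({a, b, c} : Finset (Fin n)) ∈ H.cliqueFinset 3 := by
            rw [SimpleGraph.mem_cliqueFinset_iff, SimpleGraph.is3Clique_iff]
            exact ⟨a, b, c, hab, hac, hbc, rfl⟩
          have hnot : ({a, b, c} : Finset (Fin n)) ∉ (H.deleteEdges {s(a, b)}).cliqueFinset 3 := by
            intro hmem'
            rw [SimpleGraph.mem_cliqueFinset_iff] at hmem'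
            have hadj : (H.deleteEdges {s(a, b)}).Adj a b := hmem'.1 (by simp) (by simp) hab.ne
            rw [SimpleGraph.deleteEdges_adj] at hadj
            exact hadj.2 (by simp)
          have htri : triCount (H.deleteEdges {s(a, b)}) < triCount H := by
            unfold triCount; convert Finset.card_lt_card ((Finset.ssubset_iff_of_subset hsub).mpr ⟨_, hmem, hnot⟩)
          have hsq : sqCount (H.deleteEdges {s(a, b)}) ≤ sqCount H := by
            rw [sqCount_eq, sqCount_eq]
            exact Nat.div_le_div_right (Finset.card_le_card (sqT_mono hle))
          omega
      obtain ⟨a, b, hab, hdrop⟩ := key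
      set H' := H.deleteEdges {s(a, b)} with hH'
      have he : edgeCount H' + 1 = edgeCount H := edgeCount_delete hab
      have hlt : edgeCount H' < k := by omega
      have hih := ih _ hlt H' rfl
      have hscore : score H ≤ score H' := by
        rw [score, score]
        have h1 : (edgeCount H : ℤ) = (edgeCount H' : ℤ) + 1 := by exact_mod_cast he.symm
        have h2 : (triCount H' : ℤ) + (sqCount H' : ℤ) + 1 ≤
            (triCount H : ℤ) + (sqCount H : ℤ) := by exact_mod_cast hdrop
        linarith
      linarith

theorem stmt_1 (n : ℕ) :
    ∃ G : SimpleGraph (Fin n), noC3 G ∧ noC4 G ∧ score G = (edgeCount G : ℤ) ∧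
      edgeCount G = extremalNum n ∧ ∀ H : SimpleGraph (Fin n), score H ≤ score G := by
  classical
  have hbot : (⊥ : SimpleGraph (Fin n)) ∈
      (univ : Finset (SimpleGraph (Fin n))).filter fun G => noC3 G ∧ noC4 G := by
    simp only [mem_filter, mem_univ, true_and]
    refine ⟨SimpleGraph.cliqueFree_bot (by norm_num), ?_⟩
    intro a b c d _ _ _ _ _ _ h
    exact absurd h (by simp)
  obtain ⟨G, hG, hsup⟩ := Finset.exists_mem_eq_sup _ ⟨_, hbot⟩ edgeCount
  simp only [mem_filter, mem_univ, true_and] at hG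
  obtain ⟨h3, h4⟩ := feasible_counts hG.1 hG.2
  have hscoreG : score G = (edgeCount G : ℤ) := by
    rw [score, h3, h4]; ring
  have hext : edgeCount G = extremalNum n := by
    rw [extremalNum, hsup]
  refine ⟨G, hG.1, hG.2, hscoreG, hext, ?_⟩
  intro H
  have := score_le_aux n (edgeCount H) H rfl
  rw [hscoreG, hext]
  exact_mod_cast this
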